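/- (Tile-counting estimate for incomparable dense tiles) Let 𝕊 be a tiling, J a dyadic interval, N: ℝ → ℝ measurable, f ∈ L^∞ with compact support, and δ > 0. Let ℙ' ⊂ 𝕊^J be a finite collection of pairwise incomparable tiles (with respect to the order P ≲ P' iff I_P ⊂ I_{P'} and ω_{P'}^{p(1)} ⊂ ω_P^{p(1)}) such that for every P ∈ ℙ' the tailed average ⟪f·1_{N^{-1}(ω_P^{p(1)})}⟫_{1,I_P} exceeds δ. Then Σ_{P∈ℙ'} |I_P| ≤ C·δ^{−1}·|J|·inf_J M f, where M is the Hardy–Littlewood maximal function. -/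

import Mathlib

/-- A dyadic interval `[2^k n, 2^k (n+1))` in the standard dyadic grid on `ℝ`. -/
structure DyadicInterval where
  k : ℤ
  n : ℤ
deriving DecidableEq

namespace DyadicInterval

noncomputable def len (I : DyadicInterval) : ℝ := (2 : ℝ) ^ I.k
noncomputable def left (I : DyadicInterval) : ℝ := (2 : ℝ) ^ I.k * I.n
noncomputable def set (I : DyadicInterval) : Set ℝ := Set.Ico I.left (I.left + I.len)
/-- The `κ`-th dyadic parent. -/
def parent (κ : ℕ) (I : DyadicInterval) : DyadicInterval := ⟨I.k + κ, Int.fdiv I.n (2 ^ κ)⟩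

end DyadicInterval

/-- A tile `P = I_P × ω_P`. -/
structure Tile where
  I : DyadicInterval
  ω : DyadicInterval
deriving DecidableEq

/-- The reciprocal-length constraint `ℓ(I_P)·ℓ(ω_P) = 1`. -/
def Tile.Valid (P : Tile) : Prop := P.I.k + P.ω.k = 0

/-- `T` is a `κ`-tree with top data `(I_T, ξ_T)`. -/
def IsTree (κ : ℕ) (T : Finset Tile) (IT : DyadicInterval) (ξ : ℝ) : Prop :=
  ∀ P ∈ T, P.I.set ⊆ IT.set ∧ ξ ∈ (P.ω.parent κ).set


open MeasureTheory ENNReal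

noncomputable def DyadicInterval.center (I : DyadicInterval) : ℝ := I.left + I.len / 2

noncomputable def jbracket (x : ℝ) : ℝ := Real.sqrt (1 + x ^ 2)

/-- The Hardy–Littlewood maximal function (over intervals centered at `x`). -/
noncomputable def hlMax (f : ℝ → ℂ) (x : ℝ) : ℝ≥0∞ :=
  ⨆ (r : ℝ) (_ : 0 < r),
    (ENNReal.ofReal (2 * r))⁻¹ * ∫⁻ y in Set.Ioo (x - r) (x + r), (‖f y‖₊ : ℝ≥0∞)

/-- The polynomial cutoff `χ_I(x) = ⟨(x - c_I)/ℓ_I⟩⁻¹`. -/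
noncomputable def cutoff (I : DyadicInterval) (x : ℝ) : ℝ :=
  (jbracket ((x - I.center) / I.len))⁻¹

/-- The tailed average `⟪f·1_S⟫_{1,I} = |I|⁻¹ ∫ |f| 1_S χ_I^{2⁹}`. -/
noncomputable def tailedAvg (f : ℝ → ℂ) (S : Set ℝ) (I : DyadicInterval) : ℝ≥0∞ :=
  (ENNReal.ofReal I.len)⁻¹ *
    ∫⁻ x : ℝ, S.indicator (fun y => (‖f y‖₊ : ℝ≥0∞)) x *
      ENNReal.ofReal (cutoff I x ^ (2 ^ 9 : ℕ))

/-- The Fefferman order relation `P ≲ P'` (with `κ = 1`). -/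
def TileLe (P P' : Tile) : Prop :=
  P.I.set ⊆ P'.I.set ∧ (P'.ω.parent 1).set ⊆ (P.ω.parent 1).set

namespace DyadicInterval

lemma len_pos (I : DyadicInterval) : 0 < I.len := zpow_pos (by norm_num) _

lemma volume_set (I : DyadicInterval) : MeasureTheory.volume I.set = ENNReal.ofReal I.len := by
  rw [set, Real.volume_Ico]; ring_nf

lemma center_mem (I : DyadicInterval) : I.center ∈ I.set := by
  have := I.len_pos
  constructor <;> simp only [center] <;> linarith

lemma set_nonempty (I : DyadicInterval) : I.set.Nonempty := ⟨I.center, I.center_mem⟩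

lemma abs_sub_center_le {I : DyadicInterval} {x : ℝ} (hx : x ∈ I.set) :
    |x - I.center| ≤ I.len / 2 := by
  obtain ⟨h1, h2⟩ := hx
  rw [abs_le]; simp only [center] at *; constructor <;> linarith

lemma mem_iff {I : DyadicInterval} {x : ℝ} :
    x ∈ I.set ↔ (2:ℝ) ^ I.k * I.n ≤ x ∧ x < (2:ℝ) ^ I.k * (I.n + 1) := by
  simp only [set, Set.mem_Ico, left, len]
  constructor <;> rintro ⟨h1, h2⟩ <;> constructor <;> push_cast at * <;> linarith

/-- Dyadic dichotomy. -/
lemma subset_or_disjoint {I I' : DyadicInterval} (h : I.k ≤ I'.k) :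
    I.set ⊆ I'.set ∨ Disjoint I.set I'.set := by
  by_cases hd : Disjoint I.set I'.set
  · exact Or.inr hd
  left
  obtain ⟨x, hx, hx'⟩ := Set.not_disjoint_iff.mp hd
  set d : ℕ := (I'.k - I.k).toNat with hdd
  have hk' : I'.k = I.k + d := by
    rw [hdd, Int.toNat_of_nonneg (by omega)]; ring
  have hpow : (2:ℝ) ^ I'.k = (2:ℝ) ^ I.k * (2:ℝ) ^ d := by
    rw [hk', zpow_add₀ (by norm_num : (2:ℝ) ≠ 0)]
    norm_num
  set m : ℤ := 2 ^ d * I'.n with hm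
  have hmem' : ∀ y : ℝ, y ∈ I'.set ↔ (2:ℝ) ^ I.k * m ≤ y ∧ y < (2:ℝ) ^ I.k * (m + 2 ^ d) := by
    intro y
    rw [mem_iff, hpow]
    push_cast [hm]
    constructor <;> rintro ⟨h1, h2⟩ <;> constructor <;> nlinarith []
  have hx1 := mem_iff.mp hx
  have hx2 := (hmem' x).mp hx'
  have hP : (0:ℝ) < (2:ℝ) ^ I.k := zpow_pos (by norm_num) _
  -- m ≤ n and n + 1 ≤ m + 2^d
  have h1 : (m:ℝ) < I.n + 1 := by
    have := lt_of_le_of_lt hx2.1 hx1.2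
    exact lt_of_mul_lt_mul_left this hP.le
  have h2 : (I.n:ℝ) < m + 2 ^ d := by
    have := lt_of_le_of_lt hx1.1 hx2.2
    exact lt_of_mul_lt_mul_left this hP.le
  have h1' : m ≤ I.n := by exact_mod_cast Int.lt_add_one_iff.mp (by exact_mod_cast h1)
  have h2' : I.n + 1 ≤ m + 2 ^ d := by
    have : (I.n:ℝ) < (m:ℝ) + (2:ℝ)^d := h2
    have : I.n < m + 2 ^ d := by exact_mod_cast (by push_cast; exact this : (I.n:ℝ) < ((m + 2^d : ℤ) : ℝ))
    omega
  intro y hy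
  have hy1 := mem_iff.mp hy
  rw [hmem' y]
  constructor
  · calc (2:ℝ) ^ I.k * m ≤ (2:ℝ) ^ I.k * I.n := by
          apply mul_le_mul_of_nonneg_left _ hP.le; exact_mod_cast h1'
        _ ≤ y := hy1.1
  · calc y < (2:ℝ) ^ I.k * (I.n + 1) := hy1.2
        _ ≤ (2:ℝ) ^ I.k * (m + 2 ^ d) := by
          apply mul_le_mul_of_nonneg_left _ hP.le
          have : ((I.n + 1 : ℤ) : ℝ) ≤ ((m + 2 ^ d : ℤ) : ℝ) := by exact_mod_cast h2'
          push_cast at this ⊢; linarith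

lemma len_le_len {I I' : DyadicInterval} (h : I.k ≤ I'.k) : I.len ≤ I'.len := by
  exact zpow_le_zpow_right₀ (by norm_num) h

lemma k_le_k_of_len_le {I I' : DyadicInterval} (h : I.len ≤ I'.len) : I.k ≤ I'.k := by
  by_contra hc
  exact absurd h (not_le.mpr (zpow_lt_zpow_right₀ (by norm_num) (by omega)))

lemma parent_one_k {P : Tile} (hP : P.Valid) : (P.ω.parent 1).k = 1 - P.I.k := by
  simp only [parent]
  have := hP
  unfold Tile.Valid at this
  omega

lemma measurableSet_set (I : DyadicInterval) : MeasurableSet I.set :=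
  measurableSet_Ico

end DyadicInterval
open MeasureTheory

lemma greedy_selection {α : Type*} [DecidableEq α] (r : α → ℝ) (m : α → α → Prop)
    (hsymm : ∀ a b, m a b → m b a) :
    ∀ S : Finset α, (∀ a, m a a) →
      ∃ B ⊆ S, (∀ P ∈ B, ∀ Q ∈ B, P ≠ Q → ¬ m P Q) ∧
        ∀ P ∈ S, ∃ Q ∈ B, m P Q ∧ r P ≤ r Q := by
  classical
  intro S
  induction S using Finset.strongInduction with
  | _ S ih =>
    intro hrefl
    rcases S.eq_empty_or_nonempty with rfl | hne
    · exact ⟨∅, by simp⟩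
    obtain ⟨P₀, hP₀S, hP₀max⟩ := S.exists_max_image r hne
    set S' := S.filter (fun a => ¬ m a P₀) with hS'
    have hS'sub : S' ⊆ S := Finset.filter_subset _ _
    have hP₀notin : P₀ ∉ S' := by
      simp [hS', hrefl P₀]
    have hss : S' ⊂ S := Finset.ssubset_iff_of_subset hS'sub |>.mpr ⟨P₀, hP₀S, hP₀notin⟩
    obtain ⟨B', hB'sub, hB'disj, hB'cov⟩ := ih S' hss hrefl
    refine ⟨insert P₀ B', ?_, ?_, ?_⟩
    · exact Finset.insert_subset hP₀S (hB'sub.trans hS'sub)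
    · intro P hP Q hQ hne'
      rcases Finset.mem_insert.mp hP with rfl | hP' <;>
        rcases Finset.mem_insert.mp hQ with rfl | hQ'
      · exact absurd rfl hne'
      · intro hm
        exact (Finset.mem_filter.mp (hB'sub hQ')).2 (hsymm _ _ hm)
      · exact (Finset.mem_filter.mp (hB'sub hP')).2
      · exact hB'disj P hP' Q hQ' hne'
    · intro P hPS
      by_cases hm : m P P₀
      · exact ⟨P₀, Finset.mem_insert_self _ _, hm, hP₀max P hPS⟩
      · obtain ⟨Q, hQ, hmQ, hrQ⟩ := hB'cov P (Finset.mem_filter.mpr ⟨hPS, hm⟩)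
        exact ⟨Q, Finset.mem_insert_of_mem hQ, hmQ, hrQ⟩

lemma le_hlMax (f : ℝ → ℂ) (x r : ℝ) (hr : 0 < r) :
    ∫⁻ y in Set.Ioo (x - r) (x + r), (‖f y‖₊ : ENNReal) ≤ ENNReal.ofReal (2 * r) * hlMax f x := by
  have h1 : (ENNReal.ofReal (2 * r))⁻¹ * ∫⁻ y in Set.Ioo (x - r) (x + r), (‖f y‖₊ : ENNReal)
      ≤ hlMax f x := by
    rw [hlMax]
    exact le_iSup₂ (f := fun (r : ℝ) (_ : 0 < r) =>
      (ENNReal.ofReal (2 * r))⁻¹ * ∫⁻ y in Set.Ioo (x - r) (x + r), (‖f y‖₊ : ENNReal)) r hr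
  have hne : ENNReal.ofReal (2 * r) ≠ 0 := by
    simp [ENNReal.ofReal_eq_zero]; linarith
  have htop : ENNReal.ofReal (2 * r) ≠ ⊤ := ENNReal.ofReal_ne_top
  calc ∫⁻ y in Set.Ioo (x - r) (x + r), (‖f y‖₊ : ENNReal)
      = ENNReal.ofReal (2 * r) * ((ENNReal.ofReal (2 * r))⁻¹ *
        ∫⁻ y in Set.Ioo (x - r) (x + r), (‖f y‖₊ : ENNReal)) := by
        rw [← mul_assoc, ENNReal.mul_inv_cancel hne htop, one_mul]
    _ ≤ ENNReal.ofReal (2 * r) * hlMax f x := by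
        exact mul_le_mul_right h1 _
open MeasureTheory

lemma jbracket_ge_one (x : ℝ) : 1 ≤ jbracket x := by
  rw [jbracket]
  nlinarith [Real.sq_sqrt (by positivity : (0:ℝ) ≤ 1 + x^2),
    Real.sqrt_nonneg (1 + x^2)]

lemma jbracket_ge_abs (x : ℝ) : |x| ≤ jbracket x := by
  rw [jbracket]
  nlinarith [Real.sq_sqrt (by positivity : (0:ℝ) ≤ 1 + x^2),
    Real.sqrt_nonneg (1 + x^2), sq_abs x, abs_nonneg x]

lemma cutoff_nonneg (I : DyadicInterval) (x : ℝ) : 0 ≤ cutoff I x := by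
  rw [cutoff]
  have := jbracket_ge_one ((x - I.center) / I.len)
  positivity

lemma cutoff_le_one (I : DyadicInterval) (x : ℝ) : cutoff I x ≤ 1 := by
  rw [cutoff]
  rw [inv_le_one_iff₀]; right; exact jbracket_ge_one _

lemma cutoff_le_of_far {I : DyadicInterval} {x : ℝ} {k : ℕ}
    (h : 2 ^ k * I.len < |x - I.center|) : cutoff I x ≤ ((2:ℝ) ^ k)⁻¹ := by
  have hl := I.len_pos
  have hb : (2:ℝ)^k ≤ jbracket ((x - I.center) / I.len) := by
    calc (2:ℝ)^k ≤ |x - I.center| / I.len := by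
          rw [le_div_iff₀ hl]; linarith
      _ = |(x - I.center) / I.len| := by
          rw [abs_div, abs_of_pos hl]
      _ ≤ _ := jbracket_ge_abs _
  rw [cutoff]
  exact inv_anti₀ (by positivity) hb

lemma pow_calc (j : ℕ) :
    ((2:ℝ) ^ (6*(j+1)) / 2 ^ 10) * (((2:ℝ)^j)⁻¹)^(2^9 : ℕ)
      ≤ (1/16) * (((2:ℝ)^506)⁻¹)^j := by
  apply le_of_eq
  rw [inv_pow, inv_pow, ← pow_mul, ← pow_mul]
  field_simp
  rw [show (16:ℝ) = 2^4 by norm_num, ← pow_add, ← pow_add, ← pow_add]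
  congr 1
  omega

/-- Claim A: from tailed density `> δ` extract a good spatial scale. -/
lemma exists_good_scale (f : ℝ → ℂ) (hf : Measurable f) {S : Set ℝ} (hS : MeasurableSet S)
    (I : DyadicInterval) {δ : ℝ} (hδ : 0 < δ)
    (h : ENNReal.ofReal δ < tailedAvg f S I) :
    ∃ k : ℕ, ENNReal.ofReal (2 ^ (6 * k) * δ * I.len / 2 ^ 10) ≤
      ∫⁻ x in S ∩ Metric.closedBall I.center (2 ^ k * I.len), (‖f x‖₊ : ENNReal) := by
  by_contra hc
  push_neg at hc
  set ℓ := I.len with hℓdef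
  set c := I.center with hcdef
  have hℓ : 0 < ℓ := I.len_pos
  set g : ℝ → ENNReal := S.indicator (fun y => (‖f y‖₊ : ENNReal)) with hg
  have hgmeas : Measurable g := (measurable_coe_nnreal_ennreal.comp hf.nnnorm).indicator hS
  set A : ℕ → Set ℝ := fun k => Metric.closedBall c (2 ^ k * ℓ) with hA
  set D : ℕ → Set ℝ := fun k => Nat.casesOn k (A 0) (fun j => A (j + 1) \ A j) with hD
  have hDmeas : ∀ k, MeasurableSet (D k) := by
    intro k
    cases k with
    | zero => exact measurableSet_closedBall
    | succ j => exact measurableSet_closedBall.diff measurableSet_closedBall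
  have hDsubA : ∀ k, D k ⊆ A k := by
    intro k
    cases k with
    | zero => exact subset_rfl
    | succ j => exact Set.diff_subset
  have hint : ∀ k, ∫⁻ x in A k, g x < ENNReal.ofReal (2 ^ (6 * k) * δ * ℓ / 2 ^ 10) := by
    intro k
    have heq : ∫⁻ x in A k, g x = ∫⁻ x in S ∩ A k, (‖f x‖₊ : ENNReal) := by
      rw [hg, lintegral_indicator hS, Measure.restrict_restrict hS]
    rw [heq]
    exact hc k
  have hcover : Set.univ ⊆ ⋃ k, D k := by
    intro x _
    have hex : ∃ k : ℕ, x ∈ A k := by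
      obtain ⟨n, hn⟩ := exists_nat_gt (|x - c| / ℓ)
      refine ⟨n, ?_⟩
      have hn2 : (n : ℝ) ≤ 2 ^ n := by
        exact_mod_cast Nat.le_of_lt (Nat.lt_two_pow_self (n := n))
      simp only [hA, Metric.mem_closedBall, Real.dist_eq]
      have hlt : |x - c| < n * ℓ := by
        rw [div_lt_iff₀ hℓ] at hn; linarith
      nlinarith
    classical
    have hk := Nat.find_spec hex
    refine Set.mem_iUnion.mpr ⟨Nat.find hex, ?_⟩
    cases hfind : Nat.find hex with
    | zero => rw [hfind] at hk; exact hk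
    | succ j =>
      rw [hfind] at hk
      refine ⟨hk, ?_⟩
      exact Nat.find_min hex (by omega)
  -- the main integral
  set T := ∫⁻ x : ℝ, g x * ENNReal.ofReal (cutoff I x ^ (2 ^ 9 : ℕ)) with hT
  set r : ℝ := ((2:ℝ)^506)⁻¹ with hr
  have hr0 : 0 ≤ r := by positivity
  have hr1 : r < 1 := by rw [hr]; rw [inv_lt_one_iff₀]; right; exact one_lt_pow₀ (by norm_num) (by norm_num)
  have hterm0 : ∫⁻ x in D 0, g x * ENNReal.ofReal (cutoff I x ^ (2 ^ 9 : ℕ)) ≤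
      ENNReal.ofReal (δ * ℓ / 2 ^ 10) := by
    calc ∫⁻ x in D 0, g x * ENNReal.ofReal (cutoff I x ^ (2 ^ 9 : ℕ))
          ≤ ∫⁻ x in D 0, g x := by
            apply setLIntegral_mono' (hDmeas 0)
            intro x _
            calc g x * ENNReal.ofReal (cutoff I x ^ (2 ^ 9 : ℕ)) ≤ g x * 1 := by
                  apply mul_le_mul_right
                  apply ENNReal.ofReal_le_one.mpr
                  exact pow_le_one₀ (cutoff_nonneg I x) (cutoff_le_one I x)
              _ = g x := mul_one _
        _ ≤ ∫⁻ x in A 0, g x := lintegral_mono_set (hDsubA 0)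
        _ ≤ ENNReal.ofReal (δ * ℓ / 2 ^ 10) := by
            have := (hint 0).le
            simpa using this
  have htermS : ∀ j : ℕ, ∫⁻ x in D (j+1), g x * ENNReal.ofReal (cutoff I x ^ (2 ^ 9 : ℕ)) ≤
      ENNReal.ofReal (δ * ℓ / 16 * r ^ j) := by
    intro j
    have hfar : ∀ x ∈ D (j+1), cutoff I x ^ (2^9 : ℕ) ≤ (((2:ℝ)^j)⁻¹)^(2^9 : ℕ) := by
      intro x hx
      have hxnot : x ∉ A j := hx.2
      have : 2 ^ j * ℓ < |x - c| := by
        simp only [hA, Metric.mem_closedBall, Real.dist_eq, not_le] at hxnot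
        exact hxnot
      exact pow_le_pow_left₀ (cutoff_nonneg I x) (cutoff_le_of_far this) _
    calc ∫⁻ x in D (j+1), g x * ENNReal.ofReal (cutoff I x ^ (2 ^ 9 : ℕ))
          ≤ ∫⁻ x in D (j+1), g x * ENNReal.ofReal ((((2:ℝ)^j)⁻¹)^(2^9 : ℕ)) := by
            apply setLIntegral_mono' (hDmeas (j+1))
            intro x hx
            exact mul_le_mul_right (ENNReal.ofReal_le_ofReal (hfar x hx)) _
        _ = (∫⁻ x in D (j+1), g x) * ENNReal.ofReal ((((2:ℝ)^j)⁻¹)^(2^9 : ℕ)) :=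
            lintegral_mul_const _ hgmeas
        _ ≤ ENNReal.ofReal (2 ^ (6 * (j+1)) * δ * ℓ / 2 ^ 10) *
              ENNReal.ofReal ((((2:ℝ)^j)⁻¹)^(2^9 : ℕ)) := by
            apply mul_le_mul_left
            exact le_trans (lintegral_mono_set (hDsubA (j+1))) (hint (j+1)).le
        _ ≤ ENNReal.ofReal (δ * ℓ / 16 * r ^ j) := by
            rw [← ENNReal.ofReal_mul (by positivity)]
            apply ENNReal.ofReal_le_ofReal
            have h1 : (2:ℝ) ^ (6 * (j+1)) * δ * ℓ / 2 ^ 10 * (((2:ℝ)^j)⁻¹)^(2^9 : ℕ)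
                = (δ * ℓ) * (((2:ℝ) ^ (6*(j+1)) / 2 ^ 10) * (((2:ℝ)^j)⁻¹)^(2^9 : ℕ)) := by
              ring
            rw [h1, hr]
            have h2 := pow_calc j
            have h3 : 0 ≤ δ * ℓ := by positivity
            calc (δ * ℓ) * (((2:ℝ) ^ (6*(j+1)) / 2 ^ 10) * (((2:ℝ)^j)⁻¹)^(2^9 : ℕ))
                ≤ (δ * ℓ) * ((1/16) * (((2:ℝ)^506)⁻¹)^j) := by
                  exact mul_le_mul_of_nonneg_left h2 h3
              _ = δ * ℓ / 16 * (((2:ℝ)^506)⁻¹) ^ j := by ring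
  have hTle : T ≤ ENNReal.ofReal (δ * ℓ / 2 ^ 10) +
      ∑' j : ℕ, ENNReal.ofReal (δ * ℓ / 16 * r ^ j) := by
    have step : T ≤ ∑' k, ∫⁻ x in D k, g x * ENNReal.ofReal (cutoff I x ^ (2 ^ 9 : ℕ)) := by
      calc T = ∫⁻ x in Set.univ, g x * ENNReal.ofReal (cutoff I x ^ (2 ^ 9 : ℕ)) := by
            rw [setLIntegral_univ]
        _ ≤ ∫⁻ x in ⋃ k, D k, g x * ENNReal.ofReal (cutoff I x ^ (2 ^ 9 : ℕ)) :=
            lintegral_mono_set hcover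
        _ ≤ _ := lintegral_iUnion_le _ _
    refine step.trans ?_
    rw [tsum_eq_zero_add' ENNReal.summable]
    exact add_le_add hterm0 (ENNReal.tsum_le_tsum htermS)
  have hsum : ENNReal.ofReal (δ * ℓ / 2 ^ 10) +
      ∑' j : ℕ, ENNReal.ofReal (δ * ℓ / 16 * r ^ j) ≤ ENNReal.ofReal (δ / 2 * ℓ) := by
    have hs : Summable (fun j : ℕ => δ * ℓ / 16 * r ^ j) :=
      (summable_geometric_of_lt_one hr0 hr1).mul_left _
    have htail : ∑' j : ℕ, ENNReal.ofReal (δ * ℓ / 16 * r ^ j)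
        = ENNReal.ofReal (δ * ℓ / 16 * (1 - r)⁻¹) := by
      rw [← ENNReal.ofReal_tsum_of_nonneg (fun j => by positivity) hs,
        tsum_mul_left, tsum_geometric_of_lt_one hr0 hr1]
    rw [htail, ← ENNReal.ofReal_add (by positivity) (by positivity)]
    apply ENNReal.ofReal_le_ofReal
    have hrle : (1 - r)⁻¹ ≤ 2 := by
      have hr2 : r ≤ (2:ℝ)⁻¹ := by
        rw [hr]
        apply inv_anti₀ (by norm_num)
        exact le_self_pow₀ (by norm_num) (by norm_num)
      calc (1 - r)⁻¹ ≤ ((2:ℝ)⁻¹)⁻¹ := inv_anti₀ (by norm_num) (by linarith)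
        _ = 2 := by norm_num
    have h4 : δ * ℓ / 16 * (1 - r)⁻¹ ≤ δ * ℓ / 8 := by nlinarith [mul_le_mul_of_nonneg_left hrle (by positivity : (0:ℝ) ≤ δ * ℓ / 16)]
    nlinarith
  -- conclude
  have hta : tailedAvg f S I ≤ ENNReal.ofReal (δ / 2) := by
    have heq : tailedAvg f S I = (ENNReal.ofReal ℓ)⁻¹ * T := rfl
    rw [heq]
    calc (ENNReal.ofReal ℓ)⁻¹ * T ≤ (ENNReal.ofReal ℓ)⁻¹ * ENNReal.ofReal (δ / 2 * ℓ) :=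
          mul_le_mul_right (hTle.trans hsum) _
      _ = ENNReal.ofReal (δ / 2) := by
          rw [show (δ / 2 * ℓ) = ℓ * (δ / 2) by ring]
          rw [ENNReal.ofReal_mul hℓ.le, ← mul_assoc,
            ENNReal.inv_mul_cancel (by simp [ENNReal.ofReal_eq_zero]; linarith)
              ENNReal.ofReal_ne_top, one_mul]
  have : ENNReal.ofReal δ < ENNReal.ofReal δ :=
    lt_of_lt_of_le h (hta.trans (ENNReal.ofReal_le_ofReal (by linarith)))
  exact lt_irrefl _ this
open MeasureTheory

lemma omega_subset_of_meets {P Q : Tile} (hP : P.Valid) (hQ : Q.Valid)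
    (hlen : P.I.len ≤ Q.I.len)
    (hne : ((P.ω.parent 1).set ∩ (Q.ω.parent 1).set).Nonempty) :
    (Q.ω.parent 1).set ⊆ (P.ω.parent 1).set := by
  have hk : P.I.k ≤ Q.I.k := DyadicInterval.k_le_k_of_len_le hlen
  have hk' : (Q.ω.parent 1).k ≤ (P.ω.parent 1).k := by
    rw [DyadicInterval.parent_one_k hP, DyadicInterval.parent_one_k hQ]; omega
  rcases DyadicInterval.subset_or_disjoint hk' with h | h
  · exact h
  · obtain ⟨y, hy1, hy2⟩ := hne
    exact absurd h (Set.not_disjoint_iff.mpr ⟨y, hy2, hy1⟩)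

lemma const_calc (k : ℕ) (δ L : ℝ) (hδ : 0 < δ) :
    (2:ℝ)^(k+3) * (((2:ℝ)^(6*k)*δ/2^10)⁻¹ * ((2:ℝ)^(k+3) * L)) =
      (2:ℝ)^16 * ((1:ℝ)/16)^k / δ * L := by
  have h16 : ((1:ℝ)/16)^k = ((2:ℝ)^(4*k))⁻¹ := by
    rw [div_pow, one_pow, show (16:ℝ) = 2^4 by norm_num, ← pow_mul, one_div]
  rw [h16]
  have h1 : ((2:ℝ)^(6*k)) ≠ 0 := by positivity
  have h2 : ((2:ℝ)^(4*k)) ≠ 0 := by positivity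
  field_simp
  rw [show (2:ℝ)^(6*k) = (2^k)^6 by rw [← pow_mul, mul_comm], show (2:ℝ)^(4*k) = (2^k)^4 by rw [← pow_mul, mul_comm]]
  ring

lemma class_bound (J : DyadicInterval) (N : ℝ → ℝ) (hN : Measurable N)
    (f : ℝ → ℂ) (δ : ℝ) (hδ : 0 < δ) (k : ℕ) (𝒞 : Finset Tile)
    (hvalid : ∀ P ∈ 𝒞, P.Valid)
    (hsub : ∀ P ∈ 𝒞, P.I.set ⊆ J.set)
    (hincomp : ∀ P ∈ 𝒞, ∀ P' ∈ 𝒞, P ≠ P' → ¬TileLe P P' ∧ ¬TileLe P' P)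
    (hden : ∀ P ∈ 𝒞, ENNReal.ofReal (2 ^ (6*k) * δ * P.I.len / 2 ^ 10) ≤
      ∫⁻ y in (N ⁻¹' (P.ω.parent 1).set) ∩
        Metric.closedBall P.I.center (2 ^ k * P.I.len), (‖f y‖₊ : ENNReal))
    (x : ℝ) (hx : x ∈ J.set) :
    ∑ P ∈ 𝒞, ENNReal.ofReal P.I.len ≤
      ENNReal.ofReal ((2:ℝ)^16 * ((1:ℝ)/16)^k / δ * J.len) * hlMax f x := by
  classical
  set R : Tile → Set (ℝ × ℝ) := fun P =>
    (Metric.closedBall P.I.center (2 ^ k * P.I.len)) ×ˢ (P.ω.parent 1).set with hR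
  set m : Tile → Tile → Prop := fun P Q => (R P ∩ R Q).Nonempty with hm
  have hsymm : ∀ a b, m a b → m b a := by
    rintro a b ⟨p, hp1, hp2⟩; exact ⟨p, hp2, hp1⟩
  have hrefl : ∀ a : Tile, m a a := by
    intro a
    obtain ⟨w, hw⟩ := (a.ω.parent 1).set_nonempty
    have hc : a.I.center ∈ Metric.closedBall a.I.center (2 ^ k * a.I.len) := by
      simp only [Metric.mem_closedBall, dist_self]
      have := a.I.len_pos
      positivity
    exact ⟨(a.I.center, w), ⟨hc, hw⟩, ⟨hc, hw⟩⟩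
  obtain ⟨B, hBsub, hBdisj, hBcov⟩ := greedy_selection (fun P => P.I.len) m hsymm 𝒞 hrefl
  have hcov' : ∀ P : Tile, ∃ Q : Tile, P ∈ 𝒞 → Q ∈ B ∧ m P Q ∧ P.I.len ≤ Q.I.len := by
    intro P
    by_cases hP : P ∈ 𝒞
    · obtain ⟨Q, hQ1, hQ2, hQ3⟩ := hBcov P hP
      exact ⟨Q, fun _ => ⟨hQ1, hQ2, hQ3⟩⟩
    · exact ⟨P, fun h => absurd h hP⟩
  choose QP hQP using hcov'
  have hmeet_dist : ∀ P Q : Tile, m P Q →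
      |P.I.center - Q.I.center| ≤ 2 ^ k * P.I.len + 2 ^ k * Q.I.len := by
    rintro P Q ⟨⟨y, w⟩, ⟨hy1, -⟩, ⟨hy2, -⟩⟩
    simp only [Metric.mem_closedBall, Real.dist_eq] at hy1 hy2
    calc |P.I.center - Q.I.center| ≤ |P.I.center - y| + |y - Q.I.center| := abs_sub_le _ _ _
      _ = |y - P.I.center| + |y - Q.I.center| := by rw [abs_sub_comm P.I.center y]
      _ ≤ _ := add_le_add hy1 hy2
  have homega : ∀ P Q : Tile, P.Valid → Q.Valid → P.I.len ≤ Q.I.len → m P Q →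
      (Q.ω.parent 1).set ⊆ (P.ω.parent 1).set := by
    rintro P Q hPv hQv hlen ⟨⟨y, w⟩, ⟨-, hw1⟩, ⟨-, hw2⟩⟩
    exact omega_subset_of_meets hPv hQv hlen ⟨w, hw1, hw2⟩
  -- fiber bound
  have fiber_bound : ∀ Ps ∈ B, ∑ P ∈ 𝒞.filter (fun P => QP P = Ps), ENNReal.ofReal P.I.len ≤
      ENNReal.ofReal ((2:ℝ)^(k+3) * Ps.I.len) := by
    intro Ps hPs
    set F := 𝒞.filter (fun P => QP P = Ps) with hF
    have hFsub : F ⊆ 𝒞 := Finset.filter_subset _ _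
    have hFm : ∀ P ∈ F, m P Ps ∧ P.I.len ≤ Ps.I.len := by
      intro P hP
      obtain ⟨hP𝒞, hPQ⟩ := Finset.mem_filter.mp hP
      obtain ⟨-, h2, h3⟩ := hQP P hP𝒞
      rw [hPQ] at h2 h3
      exact ⟨h2, h3⟩
    have hωF : ∀ P ∈ F, (Ps.ω.parent 1).set ⊆ (P.ω.parent 1).set := by
      intro P hP
      exact homega P Ps (hvalid P (hFsub hP)) (hvalid Ps (hBsub hPs))
        (hFm P hP).2 (hFm P hP).1
    have key2 : ∀ P ∈ F, ∀ P' ∈ F, P ≠ P' → P.I.k ≤ P'.I.k →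
        Disjoint P.I.set P'.I.set := by
      intro P hP P' hP' hne hkk
      have hlen : P.I.len ≤ P'.I.len := DyadicInterval.len_le_len hkk
      have hparent : (P'.ω.parent 1).set ⊆ (P.ω.parent 1).set := by
        apply omega_subset_of_meets (hvalid P (hFsub hP)) (hvalid P' (hFsub hP')) hlen
        obtain ⟨w, hw⟩ := (Ps.ω.parent 1).set_nonempty
        exact ⟨w, hωF P hP hw, hωF P' hP' hw⟩
      have hnotle : ¬ TileLe P P' := (hincomp P (hFsub hP) P' (hFsub hP') hne).1
      have hnotsub : ¬ (P.I.set ⊆ P'.I.set) := fun hss => hnotle ⟨hss, hparent⟩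
      rcases DyadicInterval.subset_or_disjoint hkk with h | h
      · exact absurd h hnotsub
      · exact h
    have hIdisj : (↑F : Set Tile).PairwiseDisjoint (fun P => P.I.set) := by
      intro P hP P' hP' hne
      have hP'' := Finset.mem_coe.mp hP
      have hP''' := Finset.mem_coe.mp hP'
      rcases le_total P.I.k P'.I.k with h | h
      · exact key2 P hP'' P' hP''' hne h
      · exact (key2 P' hP''' P hP'' hne.symm h).symm
    have hcont : ∀ P ∈ F, P.I.set ⊆
        Metric.closedBall Ps.I.center ((2:ℝ)^(k+2) * Ps.I.len) := by
      intro P hP z hz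
      have h1 : |z - P.I.center| ≤ P.I.len / 2 := DyadicInterval.abs_sub_center_le hz
      have h2 := hmeet_dist P Ps (hFm P hP).1
      have h3 : P.I.len ≤ Ps.I.len := (hFm P hP).2
      have hl := Ps.I.len_pos
      have hk1 : (1:ℝ) ≤ 2^k := one_le_pow₀ (by norm_num)
      have hpow : (2:ℝ)^(k+2) = 4 * 2^k := by rw [pow_add]; ring
      simp only [Metric.mem_closedBall, Real.dist_eq]
      calc |z - Ps.I.center| ≤ |z - P.I.center| + |P.I.center - Ps.I.center| :=
            abs_sub_le _ _ _
        _ ≤ P.I.len / 2 + (2^k * P.I.len + 2^k * Ps.I.len) := add_le_add h1 h2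
        _ ≤ (2:ℝ)^(k+2) * Ps.I.len := by nlinarith
    calc ∑ P ∈ F, ENNReal.ofReal P.I.len = ∑ P ∈ F, volume P.I.set :=
          Finset.sum_congr rfl fun P _ => (P.I.volume_set).symm
      _ = volume (⋃ P ∈ F, P.I.set) :=
          (measure_biUnion_finset hIdisj (fun P _ => P.I.measurableSet_set)).symm
      _ ≤ volume (Metric.closedBall Ps.I.center ((2:ℝ)^(k+2) * Ps.I.len)) :=
          measure_mono (Set.iUnion₂_subset hcont)
      _ = ENNReal.ofReal (2 * ((2:ℝ)^(k+2) * Ps.I.len)) := Real.volume_closedBall _ _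
      _ = ENNReal.ofReal ((2:ℝ)^(k+3) * Ps.I.len) := by
          congr 1
          rw [show k+3 = (k+2)+1 by omega, pow_succ]
          ring
  -- selected tiles bound
  have hJlen := J.len_pos
  have hlenJ : ∀ P ∈ B, P.I.len ≤ J.len := by
    intro P hP
    have h1 : volume P.I.set ≤ volume J.set := measure_mono (hsub P (hBsub hP))
    rw [P.I.volume_set, J.volume_set] at h1
    exact (ENNReal.ofReal_le_ofReal_iff hJlen.le).mp h1
  set Sb : Tile → Set ℝ := fun P =>
    (N ⁻¹' (P.ω.parent 1).set) ∩ Metric.closedBall P.I.center (2 ^ k * P.I.len) with hSb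
  have hSmeas : ∀ P ∈ B, MeasurableSet (Sb P) := fun P _ =>
    (hN (P.ω.parent 1).measurableSet_set).inter measurableSet_closedBall
  have hSdisj : (↑B : Set Tile).PairwiseDisjoint Sb := by
    intro P hP Q hQ hne
    rw [Function.onFun, Set.disjoint_left]
    intro y hyP hyQ
    exact hBdisj P (Finset.mem_coe.mp hP) Q (Finset.mem_coe.mp hQ) hne
      ⟨(y, N y), ⟨hyP.2, hyP.1⟩, ⟨hyQ.2, hyQ.1⟩⟩
  have hSsub : ∀ P ∈ B, Sb P ⊆
      Set.Ioo (x - (2:ℝ)^(k+2)*J.len) (x + (2:ℝ)^(k+2)*J.len) := by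
    intro P hP y hy
    have h1 : |y - P.I.center| ≤ 2^k * P.I.len := by
      have := hy.2
      simpa [Real.dist_eq] using this
    have h2 : P.I.center ∈ J.set := hsub P (hBsub hP) P.I.center_mem
    have h3 : |P.I.center - x| ≤ J.len := by
      obtain ⟨ha, hb⟩ := h2; obtain ⟨hc, hd⟩ := hx
      rw [abs_le]; constructor <;> linarith
    have h4 := hlenJ P hP
    have hk1 : (1:ℝ) ≤ 2^k := one_le_pow₀ (by norm_num)
    have hpow : (2:ℝ)^(k+2) = 4 * 2^k := by rw [pow_add]; ring
    have hPl := P.I.len_pos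
    have h5 : |y - x| ≤ 2^k * J.len + J.len := by
      calc |y - x| ≤ |y - P.I.center| + |P.I.center - x| := abs_sub_le _ _ _
        _ ≤ 2^k * J.len + J.len := by
            have : (2:ℝ)^k * P.I.len ≤ 2^k * J.len := by nlinarith
            linarith
    have h6 : (2:ℝ)^k * J.len + J.len < 2^(k+2)*J.len := by nlinarith
    have h7 := abs_lt.mp (lt_of_le_of_lt h5 h6)
    constructor <;> [linarith [h7.1]; linarith [h7.2]]
  have hselected : ENNReal.ofReal ((2:ℝ)^(6*k) * δ / 2^10) * ∑ P ∈ B, ENNReal.ofReal P.I.len ≤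
      ENNReal.ofReal ((2:ℝ)^(k+3) * J.len) * hlMax f x := by
    calc ENNReal.ofReal ((2:ℝ)^(6*k)*δ/2^10) * ∑ P ∈ B, ENNReal.ofReal P.I.len
        = ∑ P ∈ B, ENNReal.ofReal ((2:ℝ)^(6*k)*δ/2^10) * ENNReal.ofReal P.I.len := by
          rw [Finset.mul_sum]
      _ = ∑ P ∈ B, ENNReal.ofReal ((2:ℝ)^(6*k)*δ*P.I.len/2^10) := by
          refine Finset.sum_congr rfl fun P _ => ?_
          rw [← ENNReal.ofReal_mul (by positivity)]
          congr 1
          ring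
      _ ≤ ∑ P ∈ B, ∫⁻ y in Sb P, (‖f y‖₊ : ENNReal) :=
          Finset.sum_le_sum fun P hP => hden P (hBsub hP)
      _ = ∫⁻ y in ⋃ P ∈ B, Sb P, (‖f y‖₊ : ENNReal) :=
          (lintegral_biUnion_finset hSdisj hSmeas _).symm
      _ ≤ ∫⁻ y in Set.Ioo (x - (2:ℝ)^(k+2)*J.len) (x + (2:ℝ)^(k+2)*J.len), (‖f y‖₊ : ENNReal) :=
          lintegral_mono_set (Set.iUnion₂_subset hSsub)
      _ ≤ ENNReal.ofReal (2 * ((2:ℝ)^(k+2)*J.len)) * hlMax f x :=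
          le_hlMax f x _ (by positivity)
      _ = ENNReal.ofReal ((2:ℝ)^(k+3) * J.len) * hlMax f x := by
          congr 2
          rw [show k+3 = (k+2)+1 by omega, pow_succ]
          ring
  have ha0 : ENNReal.ofReal ((2:ℝ)^(6*k)*δ/2^10) ≠ 0 := by
    simp only [ne_eq, ENNReal.ofReal_eq_zero, not_le]
    positivity
  have hB_len : ∑ P ∈ B, ENNReal.ofReal P.I.len ≤
      ENNReal.ofReal (((2:ℝ)^(6*k)*δ/2^10)⁻¹) *
        (ENNReal.ofReal ((2:ℝ)^(k+3)*J.len) * hlMax f x) := by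
    rw [ENNReal.ofReal_inv_of_pos (by positivity)]
    calc ∑ P ∈ B, ENNReal.ofReal P.I.len
        = (ENNReal.ofReal ((2:ℝ)^(6*k)*δ/2^10))⁻¹ *
          (ENNReal.ofReal ((2:ℝ)^(6*k)*δ/2^10) * ∑ P ∈ B, ENNReal.ofReal P.I.len) := by
          rw [← mul_assoc, ENNReal.inv_mul_cancel ha0 ENNReal.ofReal_ne_top, one_mul]
      _ ≤ _ := mul_le_mul_right hselected _
  calc ∑ P ∈ 𝒞, ENNReal.ofReal P.I.len
      = ∑ Ps ∈ B, ∑ P ∈ 𝒞.filter (fun P => QP P = Ps), ENNReal.ofReal P.I.len :=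
        (Finset.sum_fiberwise_of_maps_to (fun P hP => (hQP P hP).1) _).symm
    _ ≤ ∑ Ps ∈ B, ENNReal.ofReal ((2:ℝ)^(k+3) * Ps.I.len) :=
        Finset.sum_le_sum fiber_bound
    _ = ENNReal.ofReal ((2:ℝ)^(k+3)) * ∑ Ps ∈ B, ENNReal.ofReal Ps.I.len := by
        rw [Finset.mul_sum]
        refine Finset.sum_congr rfl fun P _ => ?_
        rw [← ENNReal.ofReal_mul (by positivity)]
    _ ≤ ENNReal.ofReal ((2:ℝ)^(k+3)) * (ENNReal.ofReal (((2:ℝ)^(6*k)*δ/2^10)⁻¹) *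
          (ENNReal.ofReal ((2:ℝ)^(k+3)*J.len) * hlMax f x)) := mul_le_mul_right hB_len _
    _ = ENNReal.ofReal ((2:ℝ)^16 * ((1:ℝ)/16)^k / δ * J.len) * hlMax f x := by
        rw [← mul_assoc, ← ENNReal.ofReal_mul (by positivity), ← mul_assoc,
          ← ENNReal.ofReal_mul (by positivity)]
        congr 1
        have := const_calc k δ J.len hδ
        refine congrArg ENNReal.ofReal ?_
        calc (2:ℝ)^(k+3) * ((2:ℝ)^(6*k)*δ/2^10)⁻¹ * ((2:ℝ)^(k+3)*J.len)
            = (2:ℝ)^(k+3) * (((2:ℝ)^(6*k)*δ/2^10)⁻¹ * ((2:ℝ)^(k+3)*J.len)) := by ring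
          _ = _ := this

/-- tile-counting estimate for incomparable dense tiles: if `ℙ' ⊂ 𝕊^J`
is a finite collection of pairwise incomparable tiles such that
`⟪f·1_{N⁻¹(ω_P^{p(1)})}⟫_{1,I_P} > δ` for all `P ∈ ℙ'`, then
`Σ_{P ∈ ℙ'} |I_P| ≤ C δ⁻¹ |J| inf_J M f`. -/
theorem stmt13 :
    ∃ C : ℝ, 0 < C ∧
      ∀ (J : DyadicInterval) (N : ℝ → ℝ), Measurable N →
      ∀ f : ℝ → ℂ, Measurable f → (∃ B, ∀ x, ‖f x‖ ≤ B) → (∃ R, ∀ x, R < |x| → f x = 0) →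
      ∀ δ : ℝ, 0 < δ →
      ∀ ℙ' : Finset Tile,
        (∀ P ∈ ℙ', P.Valid) →
        (∀ P ∈ ℙ', P.I.set ⊆ J.set) →
        (∀ P ∈ ℙ', ∀ P' ∈ ℙ', P ≠ P' → ¬TileLe P P' ∧ ¬TileLe P' P) →
        (∀ P ∈ ℙ', ENNReal.ofReal δ <
          tailedAvg f (N ⁻¹' (P.ω.parent 1).set) P.I) →
        ∑ P ∈ ℙ', ENNReal.ofReal P.I.len ≤
          ENNReal.ofReal (C / δ * J.len) * ⨅ x ∈ J.set, hlMax f x := by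
  refine ⟨(2:ℝ)^17, by positivity, ?_⟩
  intro J N hN f hf _hB _hR δ hδ ℙ' hvalid hsub hincomp hden
  classical
  have hJ := J.len_pos
  have hex : ∀ P : Tile, ∃ k : ℕ, P ∈ ℙ' →
      ENNReal.ofReal (2 ^ (6*k) * δ * P.I.len / 2 ^ 10) ≤
      ∫⁻ y in (N ⁻¹' (P.ω.parent 1).set) ∩
        Metric.closedBall P.I.center (2 ^ k * P.I.len), (‖f y‖₊ : ENNReal) := by
    intro P
    by_cases hP : P ∈ ℙ'
    · obtain ⟨k, hk⟩ := exists_good_scale f hf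
        (hN (P.ω.parent 1).measurableSet_set) P.I hδ (hden P hP)
      exact ⟨k, fun _ => hk⟩
    · exact ⟨0, fun h => absurd h hP⟩
  choose kP hkP using hex
  have main : ∀ x ∈ J.set, ∑ P ∈ ℙ', ENNReal.ofReal P.I.len ≤
      ENNReal.ofReal ((2:ℝ)^17 / δ * J.len) * hlMax f x := by
    intro x hx
    have classb : ∀ k : ℕ, ∑ P ∈ ℙ'.filter (fun P => kP P = k), ENNReal.ofReal P.I.len ≤
        ENNReal.ofReal ((2:ℝ)^16 * ((1:ℝ)/16)^k / δ * J.len) * hlMax f x := by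
      intro k
      apply class_bound J N hN f δ hδ k _
        (fun P hP => hvalid P (Finset.filter_subset _ _ hP))
        (fun P hP => hsub P (Finset.filter_subset _ _ hP))
        (fun P hP P' hP' hne => hincomp P (Finset.filter_subset _ _ hP)
          P' (Finset.filter_subset _ _ hP') hne)
        ?_ x hx
      intro P hP
      obtain ⟨hP1, hP2⟩ := Finset.mem_filter.mp hP
      have h := hkP P hP1
      rw [hP2] at h
      exact h
    have hsummable : Summable (fun k : ℕ => (2:ℝ)^16 * ((1:ℝ)/16)^k / δ * J.len) := by
      apply Summable.congr
        (((summable_geometric_of_lt_one (by norm_num) (by norm_num :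
          ((1:ℝ)/16) < 1)).mul_left ((2:ℝ)^16 / δ * J.len)))
      intro k
      ring
    calc ∑ P ∈ ℙ', ENNReal.ofReal P.I.len
        = ∑ k ∈ ℙ'.image kP, ∑ P ∈ ℙ'.filter (fun P => kP P = k), ENNReal.ofReal P.I.len :=
          (Finset.sum_fiberwise_of_maps_to (fun P hP => Finset.mem_image_of_mem kP hP) _).symm
      _ ≤ ∑ k ∈ ℙ'.image kP,
            ENNReal.ofReal ((2:ℝ)^16 * ((1:ℝ)/16)^k / δ * J.len) * hlMax f x :=
          Finset.sum_le_sum fun k _ => classb k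
      _ = (∑ k ∈ ℙ'.image kP, ENNReal.ofReal ((2:ℝ)^16 * ((1:ℝ)/16)^k / δ * J.len)) *
            hlMax f x := by rw [Finset.sum_mul]
      _ ≤ (∑' k : ℕ, ENNReal.ofReal ((2:ℝ)^16 * ((1:ℝ)/16)^k / δ * J.len)) * hlMax f x :=
          mul_le_mul_left (ENNReal.sum_le_tsum _) _
      _ ≤ ENNReal.ofReal ((2:ℝ)^17 / δ * J.len) * hlMax f x := by
          apply mul_le_mul_left
          rw [← ENNReal.ofReal_tsum_of_nonneg (fun k => by positivity) hsummable]
          apply ENNReal.ofReal_le_ofReal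
          have heq : ∑' k : ℕ, (2:ℝ)^16 * ((1:ℝ)/16)^k / δ * J.len
              = ((2:ℝ)^16/δ*J.len) * ∑' k : ℕ, ((1:ℝ)/16)^k := by
            rw [← tsum_mul_left]
            exact tsum_congr fun k => by ring
          rw [heq, tsum_geometric_of_lt_one (by norm_num) (by norm_num)]
          have hc : (0:ℝ) ≤ 2^16/δ*J.len := by positivity
          have h15 : ((1:ℝ) - 1/16)⁻¹ ≤ 2 := by norm_num
          calc (2:ℝ)^16/δ*J.len * (1 - 1/16)⁻¹ ≤ 2^16/δ*J.len * 2 :=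
                mul_le_mul_of_nonneg_left h15 hc
            _ = 2^17/δ*J.len := by ring
  have hne : J.set.Nonempty := J.set_nonempty
  haveI : Nonempty (↥J.set) := hne.to_subtype
  calc ∑ P ∈ ℙ', ENNReal.ofReal P.I.len
      ≤ ⨅ x : J.set, ENNReal.ofReal ((2:ℝ)^17 / δ * J.len) * hlMax f x.val :=
        le_iInf fun x => main x.val x.property
    _ = ENNReal.ofReal ((2:ℝ)^17 / δ * J.len) * ⨅ x : J.set, hlMax f x.val :=
        (ENNReal.mul_iInf (fun h => absurd h ENNReal.ofReal_ne_top)).symm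
    _ = ENNReal.ofReal ((2:ℝ)^17 / δ * J.len) * ⨅ x ∈ J.set, hlMax f x := by
        rw [iInf_subtype']
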